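/- arXiv:1906.08537 — 4 statements merged into one kernel-verified Lean document; each statement's English description precedes it below -/
import Mathlib

section
/- For the sphere S_ρ ⊂ ℝ³ of radius ρ, any point o ∈ S_ρ, and any R > 0, the area of S_ρ ∩ B_R(o) satisfies Area(S_ρ ∩ B_R(o)) ≥ πR²·e^{−2R/ρ}. -/
open MeasureTheory

noncomputable section

local notation "E" => EuclideanSpace ℝ (Fin 3)
open ENNReal
lemma exp_quad (t : ℝ) (ht : 0 ≤ t) : 1 + 2*t + 2*t^2 ≤ Real.exp (2*t) := by
  have h := Real.quadratic_le_exp_of_nonneg (by linarith : (0:ℝ) ≤ 2*t)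
  nlinarith [h]

lemma caseA_ineq (t : ℝ) (ht0 : 0 < t) (ht2 : t^2 < 2) : Real.exp (-(2*t)) ≤ 1 - t^2/4 := by
  have hq := exp_quad t ht0.le
  have h14 : 0 < 1 - t^2/4 := by nlinarith
  rw [Real.exp_neg, inv_eq_one_div, div_le_iff₀ (Real.exp_pos _)]
  nlinarith [mul_le_mul_of_nonneg_left hq h14.le, mul_pos ht0 ht0,
    mul_nonneg ht0.le (sub_nonneg.mpr ht2.le)]

lemma caseB_ineq (t : ℝ) (ht0 : 0 < t) (ht2 : 2 ≤ t^2) : t^2 * Real.exp (-(2*t)) ≤ 1 := by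
  have hq := exp_quad t ht0.le
  rw [Real.exp_neg, mul_inv_le_iff₀ (Real.exp_pos _), one_mul]
  nlinarith

lemma disk_lower (r : ℝ) (hr : 0 ≤ r) :
    ENNReal.ofReal (Real.pi * r ^ 2)
      ≤ μH[2] (Metric.ball (0 : EuclideanSpace ℝ (Fin 2)) r) := by
  have hlip : LipschitzWith 1 (WithLp.equiv 2 (Fin 2 → ℝ)) :=
    PiLp.lipschitzWith_ofLp 2 (fun _ : Fin 2 => ℝ)
  have h1 := hlip.hausdorffMeasure_image_le (by norm_num : (0:ℝ) ≤ 2)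
      (Metric.ball (0 : EuclideanSpace ℝ (Fin 2)) r)
  have hpi : (μH[2] : Measure (Fin 2 → ℝ)) = volume := by
    have := hausdorffMeasure_pi_real (ι := Fin 2)
    simpa using this
  have himg : (WithLp.equiv 2 (Fin 2 → ℝ)) '' (Metric.ball (0 : EuclideanSpace ℝ (Fin 2)) r)
      = (MeasurableEquiv.toLp 2 (Fin 2 → ℝ)) ⁻¹'
          (Metric.ball (0 : EuclideanSpace ℝ (Fin 2)) r) := by
    rw [MeasurableEquiv.coe_toLp]
    exact Equiv.image_eq_preimage_symm _ _
  have hvol : volume ((WithLp.equiv 2 (Fin 2 → ℝ)) ''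
      (Metric.ball (0 : EuclideanSpace ℝ (Fin 2)) r))
      = volume (Metric.ball (0 : EuclideanSpace ℝ (Fin 2)) r) := by
    rw [himg]
    exact MeasurePreserving.measure_preimage (MeasurePreserving.symm _ (EuclideanSpace.volume_preserving_symm_measurableEquiv_toLp (Fin 2)))
      measurableSet_ball.nullMeasurableSet
  have hball : volume (Metric.ball (0 : EuclideanSpace ℝ (Fin 2)) r)
      = ENNReal.ofReal (Real.pi * r ^ 2) := by
    rw [EuclideanSpace.volume_ball]
    simp only [Fintype.card_fin]
    rw [show ((2:ℕ) : ℝ) / 2 + 1 = 2 by norm_num, Real.Gamma_two,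
      Real.sq_sqrt Real.pi_nonneg, div_one, ← ENNReal.ofReal_pow hr,
      ← ENNReal.ofReal_mul (pow_nonneg hr 2), mul_comm]
  calc ENNReal.ofReal (Real.pi * r ^ 2)
      = volume ((WithLp.equiv 2 (Fin 2 → ℝ)) ''
          (Metric.ball (0 : EuclideanSpace ℝ (Fin 2)) r)) := by rw [hvol, hball]
    _ = μH[2] ((WithLp.equiv 2 (Fin 2 → ℝ)) ''
          (Metric.ball (0 : EuclideanSpace ℝ (Fin 2)) r)) := by rw [hpi]
    _ ≤ ((1 : NNReal) : ℝ≥0∞) ^ (2:ℝ) * μH[2] (Metric.ball (0 : EuclideanSpace ℝ (Fin 2)) r) := h1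
    _ = μH[2] (Metric.ball (0 : EuclideanSpace ℝ (Fin 2)) r) := by simp

lemma scoop_lower (ρ R r : ℝ) (hρ : 0 < ρ) (hR : 0 < R) (hr : 0 < r) (hrρ : r ≤ ρ)
    (o : E) (ho : ‖o‖ = ρ)
    (hcond : ∀ x : ℝ, 0 ≤ x → x < r → 2 * ρ * (ρ - Real.sqrt (ρ ^ 2 - x ^ 2)) < R ^ 2) :
    ENNReal.ofReal (Real.pi * r ^ 2)
      ≤ μH[2] (Metric.sphere (0 : E) ρ ∩ Metric.ball o R) := by
  have ho0 : o ≠ 0 := by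
    intro h; rw [h, norm_zero] at ho; linarith
  have hUfin : Module.finrank ℝ ((ℝ ∙ o)ᗮ) = 2 := by
    have hKfin : Module.finrank ℝ (ℝ ∙ o) = 1 := finrank_span_singleton ho0
    have h := (ℝ ∙ o).finrank_add_finrank_orthogonal
    have hEfin : Module.finrank ℝ E = 3 := finrank_euclideanSpace_fin
    rw [hKfin] at h
    omega
  obtain ⟨ψ⟩ : Nonempty ((ℝ ∙ o)ᗮ ≃ₗᵢ[ℝ] EuclideanSpace ℝ (Fin 2)) :=
    ⟨((stdOrthonormalBasis ℝ ((ℝ ∙ o)ᗮ)).reindex (finCongr hUfin)).repr⟩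
  set Φ : E → EuclideanSpace ℝ (Fin 2) := fun x => ψ (Submodule.orthogonalProjectionOnto ((ℝ ∙ o)ᗮ) x) with hΦ
  have hPnorm : ∀ z : E, ‖(Submodule.orthogonalProjectionOnto ((ℝ ∙ o)ᗮ) z : (ℝ ∙ o)ᗮ)‖ ≤ ‖z‖ := by
    intro z
    calc ‖(Submodule.orthogonalProjectionOnto ((ℝ ∙ o)ᗮ) z : (ℝ ∙ o)ᗮ)‖
        ≤ ‖Submodule.orthogonalProjectionOnto ((ℝ ∙ o)ᗮ)‖ * ‖z‖ :=
          (Submodule.orthogonalProjectionOnto ((ℝ ∙ o)ᗮ)).le_opNorm z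
      _ ≤ 1 * ‖z‖ :=
          mul_le_mul_of_nonneg_right (Submodule.orthogonalProjectionOnto_norm_le _) (norm_nonneg z)
      _ = ‖z‖ := one_mul _
  have hΦlip : LipschitzWith 1 Φ := by
    apply LipschitzWith.of_dist_le_mul
    intro x y
    simp only [hΦ, dist_eq_norm]
    rw [← map_sub ψ, ψ.norm_map, ← map_sub]
    rw [NNReal.coe_one, one_mul]
    exact hPnorm (x - y)
  have hball : Metric.ball (0 : EuclideanSpace ℝ (Fin 2)) r
      ⊆ Φ '' (Metric.sphere (0 : E) ρ ∩ Metric.ball o R) := by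
    rintro w hw
    set v : ((ℝ ∙ o)ᗮ : Submodule ℝ E) := ψ.symm w with hv
    have hvw : ‖(v : E)‖ = ‖w‖ := by
      rw [Submodule.norm_coe, hv, ψ.symm.norm_map]
    have hψv : ψ v = w := ψ.apply_symm_apply w
    clear_value v
    obtain ⟨x, hxv, hx0, hxr⟩ : ∃ x : ℝ, x = ‖(v : E)‖ ∧ 0 ≤ x ∧ x < r :=
      ⟨‖(v : E)‖, rfl, norm_nonneg _, by rw [hvw]; exact mem_ball_zero_iff.mp hw⟩
    have hxρ : x < ρ := lt_of_lt_of_le hxr hrρ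
    obtain ⟨s, hs⟩ : ∃ s : ℝ, s = Real.sqrt (ρ ^ 2 - x ^ 2) := ⟨_, rfl⟩
    have hs2 : s ^ 2 = ρ ^ 2 - x ^ 2 := by
      rw [hs]; exact Real.sq_sqrt (by nlinarith)
    have hs0 : 0 < s := by
      rw [hs]; exact Real.sqrt_pos.mpr (by nlinarith)
    have hsρ : s ≤ ρ := by nlinarith
    have hinner : inner ℝ (v : E) o = (0 : ℝ) := by
      rw [real_inner_comm]
      exact Submodule.inner_right_of_mem_orthogonal (Submodule.mem_span_singleton_self o) v.2
    have hnorm : ∀ c : ℝ, ‖(v : E) + c • o‖ ^ 2 = x ^ 2 + c ^ 2 * ρ ^ 2 := by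
      intro c
      rw [norm_add_sq_real, real_inner_smul_right, hinner, norm_smul, ho, ← hxv]
      simp only [Real.norm_eq_abs, mul_zero, mul_pow, sq_abs]
      ring
    have hρ0 : ρ ≠ 0 := ne_of_gt hρ
    obtain ⟨p, hp⟩ : ∃ p : E, p = (v : E) + (s / ρ) • o := ⟨_, rfl⟩
    have hdiv1 : (s / ρ) ^ 2 * ρ ^ 2 = s ^ 2 := by
      field_simp
    have hpsq : ‖p‖ ^ 2 = ρ ^ 2 := by
      rw [hp, hnorm, hdiv1]
      linear_combination hs2
    have hpsphere : p ∈ Metric.sphere (0 : E) ρ := by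
      rw [mem_sphere_zero_iff_norm, ← Real.sqrt_sq (norm_nonneg p), hpsq,
        Real.sqrt_sq hρ.le]
    have hpball : p ∈ Metric.ball o R := by
      rw [Metric.mem_ball, dist_eq_norm]
      have hpo : p - o = (v : E) + (s / ρ - 1) • o := by
        rw [hp]; module
      have hdiv2 : (s / ρ - 1) ^ 2 * ρ ^ 2 = (s - ρ) ^ 2 := by
        field_simp
      have hposq : ‖p - o‖ ^ 2 = 2 * ρ * (ρ - s) := by
        rw [hpo, hnorm, hdiv2]
        linear_combination hs2
      have hlt : ‖p - o‖ ^ 2 < R ^ 2 := by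
        rw [hposq, hs]; exact hcond x hx0 hxr
      exact lt_of_pow_lt_pow_left₀ 2 hR.le hlt
    refine ⟨p, ⟨hpsphere, hpball⟩, ?_⟩
    rw [hΦ]
    simp only [hp, map_add, _root_.map_smul,
      Submodule.orthogonalProjectionOnto_mem_subspace_eq_self,
      Submodule.orthogonalProjectionOnto_apply_of_mem_orthogonal
        ((ℝ ∙ o).le_orthogonal_orthogonal (Submodule.mem_span_singleton_self o)),
      smul_zero, map_zero, add_zero, hψv]
  calc ENNReal.ofReal (Real.pi * r ^ 2)
      ≤ μH[2] (Metric.ball (0 : EuclideanSpace ℝ (Fin 2)) r) := disk_lower r hr.le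
    _ ≤ μH[2] (Φ '' (Metric.sphere (0 : E) ρ ∩ Metric.ball o R)) := measure_mono hball
    _ ≤ ((1 : NNReal) : ℝ≥0∞) ^ (2 : ℝ) *
          μH[2] (Metric.sphere (0 : E) ρ ∩ Metric.ball o R) :=
        hΦlip.hausdorffMeasure_image_le (by norm_num) _
    _ = μH[2] (Metric.sphere (0 : E) ρ ∩ Metric.ball o R) := by simp


/-- For the round sphere of radius `ρ` in `ℝ³`, any point `o` on it,
and any `R > 0`, the area of the spherical scoop satisfies
`Area(S_ρ ∩ B_R(o)) ≥ πR² e^{−2R/ρ}`. -/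
theorem area_sphere_scoop_lower_bound (ρ R : ℝ) (hρ : 0 < ρ) (hR : 0 < R)
    (o : E) (ho : o ∈ Metric.sphere (0 : E) ρ) :
    ENNReal.ofReal (Real.pi * R ^ 2 * Real.exp (-2 * R / ρ))
      ≤ μH[2] (Metric.sphere (0 : E) ρ ∩ Metric.ball o R) := by
  have ho' : ‖o‖ = ρ := by
    have := Metric.mem_sphere.mp ho
    rwa [dist_zero_right] at this
  have hρ0 : ρ ≠ 0 := ne_of_gt hρ
  obtain ⟨t, ht⟩ : ∃ t : ℝ, t = R / ρ := ⟨_, rfl⟩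
  have ht0 : 0 < t := by rw [ht]; positivity
  have htρ : t * ρ = R := by rw [ht]; field_simp
  have hexp : -2 * R / ρ = -(2 * t) := by rw [ht]; field_simp
  by_cases hcase : R ^ 2 < 2 * ρ ^ 2
  · -- small scoop: project to the tangent plane
    have ht2 : t ^ 2 < 2 := by
      rw [ht, div_pow, div_lt_iff₀ (by positivity)]
      linarith
    have hA : 0 < R ^ 2 - R ^ 4 / (4 * ρ ^ 2) := by
      rw [sub_pos, div_lt_iff₀ (by positivity)]
      nlinarith [mul_lt_mul_of_pos_left hcase (mul_pos hR hR), sq_nonneg ρ, mul_pos hρ hρ]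
    obtain ⟨r, hr⟩ : ∃ r : ℝ, r = Real.sqrt (R ^ 2 - R ^ 4 / (4 * ρ ^ 2)) := ⟨_, rfl⟩
    have hr2 : r ^ 2 = R ^ 2 - R ^ 4 / (4 * ρ ^ 2) := by
      rw [hr]; exact Real.sq_sqrt hA.le
    have hr0 : 0 < r := by rw [hr]; exact Real.sqrt_pos.mpr hA
    have hrρ : r ≤ ρ := by
      by_contra h
      push_neg at h
      have h1 : ρ ^ 2 < r ^ 2 := by nlinarith
      have hr2' : r ^ 2 * (4 * ρ ^ 2) = R ^ 2 * (4 * ρ ^ 2) - R ^ 4 := by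
        rw [hr2]; field_simp
      nlinarith [sq_nonneg (2 * ρ ^ 2 - R ^ 2), mul_pos hρ hρ]
    have hcond : ∀ x : ℝ, 0 ≤ x → x < r →
        2 * ρ * (ρ - Real.sqrt (ρ ^ 2 - x ^ 2)) < R ^ 2 := by
      intro x hx0 hxr
      have hx2 : x ^ 2 < r ^ 2 := by nlinarith
      have hsq : (ρ - R ^ 2 / (2 * ρ)) ^ 2 < ρ ^ 2 - x ^ 2 := by
        rw [hr2] at hx2
        have : (ρ - R ^ 2 / (2 * ρ)) ^ 2 = ρ ^ 2 - R ^ 2 + R ^ 4 / (4 * ρ ^ 2) := by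
          field_simp; ring
        rw [this]; linarith
      have hkey : ρ - R ^ 2 / (2 * ρ) < Real.sqrt (ρ ^ 2 - x ^ 2) := by
        rcases le_or_gt 0 (ρ - R ^ 2 / (2 * ρ)) with h | h
        · rw [← Real.sqrt_sq h]
          exact Real.sqrt_lt_sqrt (sq_nonneg _) hsq
        · exact lt_of_lt_of_le h (Real.sqrt_nonneg _)
      have hRd : 2 * ρ * (R ^ 2 / (2 * ρ)) = R ^ 2 := by field_simp
      nlinarith [hkey, hρ]
    refine le_trans ?_ (scoop_lower ρ R r hρ hR hr0 hrρ o ho' hcond)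
    apply ENNReal.ofReal_le_ofReal
    have hkey : R ^ 2 * Real.exp (-2 * R / ρ) ≤ r ^ 2 := by
      rw [hexp]
      have h1 := caseA_ineq t ht0 ht2
      have h2 : R ^ 2 * (1 - t ^ 2 / 4) = R ^ 2 - R ^ 4 / (4 * ρ ^ 2) := by
        rw [ht]; field_simp
      calc R ^ 2 * Real.exp (-(2 * t)) ≤ R ^ 2 * (1 - t ^ 2 / 4) :=
            mul_le_mul_of_nonneg_left h1 (sq_nonneg R)
        _ = r ^ 2 := by rw [h2, hr2]
    calc Real.pi * R ^ 2 * Real.exp (-2 * R / ρ)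
        = Real.pi * (R ^ 2 * Real.exp (-2 * R / ρ)) := by ring
      _ ≤ Real.pi * r ^ 2 := mul_le_mul_of_nonneg_left hkey Real.pi_nonneg
  · -- big scoop: project to the equatorial plane
    push_neg at hcase
    have ht2 : 2 ≤ t ^ 2 := by
      rw [ht, div_pow, le_div_iff₀ (by positivity)]
      linarith
    have hcond : ∀ x : ℝ, 0 ≤ x → x < ρ →
        2 * ρ * (ρ - Real.sqrt (ρ ^ 2 - x ^ 2)) < R ^ 2 := by
      intro x hx0 hxr
      have hsp : 0 < Real.sqrt (ρ ^ 2 - x ^ 2) := Real.sqrt_pos.mpr (by nlinarith)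
      nlinarith
    refine le_trans ?_ (scoop_lower ρ R ρ hρ hR hρ le_rfl o ho' hcond)
    apply ENNReal.ofReal_le_ofReal
    have hkey : R ^ 2 * Real.exp (-2 * R / ρ) ≤ ρ ^ 2 := by
      rw [hexp]
      have h1 := caseB_ineq t ht0 ht2
      have h2 : R ^ 2 = t ^ 2 * ρ ^ 2 := by rw [← htρ]; ring
      calc R ^ 2 * Real.exp (-(2 * t)) = (t ^ 2 * Real.exp (-(2 * t))) * ρ ^ 2 := by
            rw [h2]; ring
        _ ≤ 1 * ρ ^ 2 := mul_le_mul_of_nonneg_right h1 (sq_nonneg ρ)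
        _ = ρ ^ 2 := one_mul _
    calc Real.pi * R ^ 2 * Real.exp (-2 * R / ρ)
        = Real.pi * (R ^ 2 * Real.exp (-2 * R / ρ)) := by ring
      _ ≤ Real.pi * ρ ^ 2 := mul_le_mul_of_nonneg_left hkey Real.pi_nonneg

end
end

section
/- For the infinite circular cylinder C_ρ = {(x,y,z) ∈ ℝ³ : x² + y² = ρ²} and any point o ∈ C_ρ and any R > 0, the area of C_ρ ∩ B_R(o) satisfies Area(C_ρ ∩ B_R(o)) ≥ πR²·e^{−2R/ρ}. -/
open MeasureTheory

noncomputable section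

local notation "E" => EuclideanSpace ℝ (Fin 3)

private lemma exp_key (u : ℝ) (hu : 0 < u) :
    Real.exp (-u) ^ 2 + u ^ 2 * Real.exp (-u) ^ 4 ≤ 1 := by
  set x := Real.exp (-u) with hx
  have h1 : u + 1 ≤ Real.exp u := Real.add_one_le_exp u
  have h2 : x * Real.exp u = 1 := by rw [hx, ← Real.exp_add]; simp
  have h3 : (0:ℝ) < x := Real.exp_pos _
  have hs1 : x * (1 + u) ≤ 1 := by nlinarith
  have hx1 : x ≤ 1 := by nlinarith
  have hxy : x * u ≤ 1 - x := by nlinarith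
  have hxy0 : (0:ℝ) ≤ x * u := by positivity
  nlinarith [mul_nonneg (show (0:ℝ) ≤ 1 - x by linarith)
      (show (0:ℝ) ≤ 1 + x*(1-x) + x^3 by
        nlinarith [mul_nonneg h3.le (show (0:ℝ) ≤ 1-x by linarith), pow_pos h3 3]),
    mul_nonneg (show (0:ℝ) ≤ 1 - x - x*u by linarith) (show (0:ℝ) ≤ 1 - x + x*u by linarith),
    sq_nonneg x, sq_nonneg (x*u)]

private lemma chord_bound (ρ a c : ℝ) (hρ : 0 < ρ) (ha : a ^ 2 ≤ ρ ^ 2) (hc0 : 0 ≤ c)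
    (hc2 : ρ ^ 2 * c ^ 2 = ρ ^ 2 - a ^ 2) :
    2 * ρ ^ 4 * (1 - c) ≤ a ^ 2 * ρ ^ 2 + a ^ 4 := by
  have hY0 : (0:ℝ) ≤ 2 * ρ ^ 4 * c := by positivity
  have hid : (2 * ρ ^ 4 * c) ^ 2 - (2 * ρ ^ 4 - a ^ 2 * ρ ^ 2 - a ^ 4) ^ 2
      = a ^ 4 * (3 * ρ ^ 2 + a ^ 2) * (ρ ^ 2 - a ^ 2) := by
    linear_combination (4 * ρ ^ 6) * hc2
  have hnn : (0:ℝ) ≤ a ^ 4 * (3 * ρ ^ 2 + a ^ 2) * (ρ ^ 2 - a ^ 2) :=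
    mul_nonneg (mul_nonneg (by positivity) (by positivity)) (by linarith)
  have hsq : (2 * ρ ^ 4 - a ^ 2 * ρ ^ 2 - a ^ 4) ^ 2 ≤ (2 * ρ ^ 4 * c) ^ 2 := by linarith
  have hX : 2 * ρ ^ 4 - a ^ 2 * ρ ^ 2 - a ^ 4 ≤ 2 * ρ ^ 4 * c := by
    calc 2 * ρ ^ 4 - a ^ 2 * ρ ^ 2 - a ^ 4 ≤ |2 * ρ ^ 4 - a ^ 2 * ρ ^ 2 - a ^ 4| := le_abs_self _
    _ = Real.sqrt ((2 * ρ ^ 4 - a ^ 2 * ρ ^ 2 - a ^ 4) ^ 2) := (Real.sqrt_sq_eq_abs _).symm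
    _ ≤ Real.sqrt ((2 * ρ ^ 4 * c) ^ 2) := Real.sqrt_le_sqrt hsq
    _ = 2 * ρ ^ 4 * c := Real.sqrt_sq hY0
  linarith

private lemma disc_area (r z : ℝ) (hr : 0 < r) :
    μH[2] {p : ℝ × ℝ | p.1 ^ 2 + (p.2 - z) ^ 2 < r ^ 2} = ENNReal.ofReal (Real.pi * r ^ 2) := by
  rw [hausdorffMeasure_prod_real]
  set D : Set (ℝ × ℝ) := {p : ℝ × ℝ | p.1 ^ 2 + (p.2 - z) ^ 2 < r ^ 2} with hD
  have hDopen : IsOpen D := by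
    apply isOpen_lt (by fun_prop) continuous_const
  set g : EuclideanSpace ℝ (Fin 2) → ℝ × ℝ := fun q => (q 0, q 1) with hg
  have hgmp : MeasurePreserving g volume volume := by
    exact (volume_preserving_piFinTwo (fun _ : Fin 2 => ℝ)).comp
      (EuclideanSpace.volume_preserving_symm_measurableEquiv_toLp (Fin 2))
  set c2 : EuclideanSpace ℝ (Fin 2) := (WithLp.equiv 2 (Fin 2 → ℝ)).symm ![0, z] with hc2
  have hpre : g ⁻¹' D = Metric.ball c2 r := by
    ext q
    simp only [Set.mem_preimage, hD, Set.mem_setOf_eq, hg, Metric.mem_ball,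
      EuclideanSpace.dist_eq, Fin.sum_univ_two, hc2, WithLp.equiv_symm_apply, PiLp.toLp_apply,
      Matrix.cons_val_zero, Matrix.cons_val_one, Matrix.head_cons]
    rw [Real.sqrt_lt' hr]
    simp [Real.dist_eq, sq_abs, sub_zero]
  have h1 : volume D = volume (Metric.ball c2 r) := by
    rw [← hpre, hgmp.measure_preimage hDopen.measurableSet.nullMeasurableSet]
  rw [h1, EuclideanSpace.volume_ball]
  simp only [Fintype.card_fin]
  rw [show ((2:ℕ):ℝ)/2 + 1 = 2 by norm_num, Real.Gamma_two]
  rw [Real.sq_sqrt Real.pi_pos.le, div_one, ← ENNReal.ofReal_pow hr.le,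
    ← ENNReal.ofReal_mul (by positivity)]
  ring_nf


private lemma ball_step (ρ R r a b c s : ℝ) (hρ : 0 < ρ) (hR : 0 < R) (o : EuclideanSpace ℝ (Fin 3))
    (ho' : o 0 ^ 2 + o 1 ^ 2 = ρ ^ 2)
    (hp : a ^ 2 + (b - o 2) ^ 2 < r ^ 2)
    (hkey : r ^ 2 + r ^ 4 / ρ ^ 2 ≤ R ^ 2)
    (hcs1 : c ^ 2 + s ^ 2 = 1) (ha2 : a ^ 2 < r ^ 2)
    (hchord : 2 * ρ ^ 4 * (1 - c) ≤ a ^ 2 * ρ ^ 2 + a ^ 4)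
    (q : EuclideanSpace ℝ (Fin 3))
    (hq0 : q 0 = o 0 * c - o 1 * s)
    (hq1 : q 1 = o 1 * c + o 0 * s)
    (hq2 : q 2 = b) :
    q ∈ Metric.ball o R := by
  rw [Metric.mem_ball, EuclideanSpace.dist_eq, Fin.sum_univ_three,
    Real.sqrt_lt' hR, hq0, hq1, hq2]
  simp only [Real.dist_eq, sq_abs]
  have hexpand : (o 0 * c - o 1 * s - o 0) ^ 2 + (o 1 * c + o 0 * s - o 1) ^ 2
      = ρ ^ 2 * (2 - 2 * c) := by
    linear_combination (c ^ 2 + s ^ 2 - 2 * c + 1) * ho' + ρ ^ 2 * hcs1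
  have ha4 : a ^ 4 ≤ r ^ 4 := by nlinarith
  have hρ2 : (0:ℝ) < ρ ^ 2 := by positivity
  have hkeym : r ^ 2 * ρ ^ 2 + r ^ 4 ≤ R ^ 2 * ρ ^ 2 := by
    have h := mul_le_mul_of_nonneg_right hkey (sq_nonneg ρ)
    rw [add_mul, div_mul_cancel₀ _ (by positivity : (ρ:ℝ) ^ 2 ≠ 0)] at h
    exact h
  have hpρ := mul_lt_mul_of_pos_right hp hρ2
  nlinarith [hexpand, ha4, hkeym, hpρ, hρ2, hchord]

set_option maxHeartbeats 1000000 in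
/-- For the infinite circular cylinder
`C_ρ = {(x,y,z) : x² + y² = ρ²}` in `ℝ³`, any point `o ∈ C_ρ`, and any `R > 0`, the
area of the scoop satisfies `Area(C_ρ ∩ B_R(o)) ≥ πR² e^{−2R/ρ}`. -/
theorem area_cylinder_scoop_lower_bound (ρ R : ℝ) (hρ : 0 < ρ) (hR : 0 < R)
    (o : E) (ho : o ∈ {q : E | q 0 ^ 2 + q 1 ^ 2 = ρ ^ 2}) :
    ENNReal.ofReal (Real.pi * R ^ 2 * Real.exp (-2 * R / ρ))
      ≤ μH[2] ({q : E | q 0 ^ 2 + q 1 ^ 2 = ρ ^ 2} ∩ Metric.ball o R) := by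
  have ho' : o 0 ^ 2 + o 1 ^ 2 = ρ ^ 2 := ho
  have hρ0 : ρ ≠ 0 := hρ.ne'
  set u : ℝ := R / ρ with hu
  have hu0 : 0 < u := div_pos hR hρ
  set r : ℝ := R * Real.exp (-(R / ρ)) with hr
  have hr0 : 0 < r := mul_pos hR (Real.exp_pos _)
  -- r < ρ
  have hE1 : u + 1 ≤ Real.exp u := Real.add_one_le_exp u
  have hE2 : Real.exp (-u) * Real.exp u = 1 := by rw [← Real.exp_add]; simp
  have hE3 : (0:ℝ) < Real.exp (-u) := Real.exp_pos _
  have hues : u * Real.exp (-u) < 1 := by nlinarith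
  have hrρ : r < ρ := by
    have hreq : r = (u * Real.exp (-u)) * ρ := by
      rw [hr, hu]; field_simp
    rw [hreq]
    nlinarith
  -- key inequality r^2 + r^4/ρ^2 ≤ R^2
  have hkey : r ^ 2 + r ^ 4 / ρ ^ 2 ≤ R ^ 2 := by
    have h5 : r ^ 2 + r ^ 4 / ρ ^ 2
        = (Real.exp (-u) ^ 2 + u ^ 2 * Real.exp (-u) ^ 4) * R ^ 2 := by
      rw [hr, hu]; field_simp
    rw [h5]
    nlinarith [exp_key u hu0, sq_nonneg R]
  -- the projection map
  set f : E → ℝ × ℝ := fun q => ((- o 1 * q 0 + o 0 * q 1) / ρ, q 2) with hf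
  have hlip : LipschitzWith 1 f := by
    rw [lipschitzWith_iff_dist_le_mul]
    intro x y
    rw [NNReal.coe_one, one_mul, Prod.dist_eq, EuclideanSpace.dist_eq, Fin.sum_univ_three]
    simp only [Real.dist_eq, sq_abs, hf]
    apply max_le
    · rw [← Real.sqrt_sq_eq_abs]
      apply Real.sqrt_le_sqrt
      have key : (-o 1 * x 0 + o 0 * x 1) / ρ - (-o 1 * y 0 + o 0 * y 1) / ρ
          = (-o 1 * (x 0 - y 0) + o 0 * (x 1 - y 1)) / ρ := by ring
      rw [key, div_pow, div_le_iff₀ (by positivity : (0:ℝ) < ρ ^ 2)]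
      nlinarith [sq_nonneg (o 0 * (x 0 - y 0) + o 1 * (x 1 - y 1)), sq_nonneg (x 2 - y 2),
        sq_nonneg ρ, sq_nonneg (x 0 - y 0), sq_nonneg (x 1 - y 1)]
    · rw [← Real.sqrt_sq_eq_abs]
      apply Real.sqrt_le_sqrt
      nlinarith [sq_nonneg (x 0 - y 0), sq_nonneg (x 1 - y 1)]
  -- the disc is contained in the image
  set S : Set E := {q : E | q 0 ^ 2 + q 1 ^ 2 = ρ ^ 2} ∩ Metric.ball o R with hS
  have hincl : {p : ℝ × ℝ | p.1 ^ 2 + (p.2 - o 2) ^ 2 < r ^ 2} ⊆ f '' S := by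
    rintro ⟨a, b⟩ hp
    simp only [Set.mem_setOf_eq] at hp
    have ha2 : a ^ 2 < r ^ 2 := by nlinarith [sq_nonneg (b - o 2)]
    have haρ : a ^ 2 ≤ ρ ^ 2 := by nlinarith
    set s : ℝ := a / ρ with hsdef
    set c : ℝ := Real.sqrt (1 - a ^ 2 / ρ ^ 2) with hcdef
    have h1t : 0 ≤ 1 - a ^ 2 / ρ ^ 2 := by
      rw [sub_nonneg, div_le_one (by positivity)]; exact haρ
    have hc0 : 0 ≤ c := Real.sqrt_nonneg _
    have hcsq : c ^ 2 = 1 - a ^ 2 / ρ ^ 2 := Real.sq_sqrt h1t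
    have hcρ : ρ ^ 2 * c ^ 2 = ρ ^ 2 - a ^ 2 := by
      rw [hcsq]; field_simp
    have hcs1 : c ^ 2 + s ^ 2 = 1 := by
      rw [hcsq, hsdef]; field_simp; ring
    set q : E := (WithLp.equiv 2 (Fin 3 → ℝ)).symm ![o 0 * c - o 1 * s, o 1 * c + o 0 * s, b]
      with hqdef
    have hq0 : q 0 = o 0 * c - o 1 * s := by
      rw [hqdef, WithLp.equiv_symm_apply]; simp
    have hq1 : q 1 = o 1 * c + o 0 * s := by
      rw [hqdef, WithLp.equiv_symm_apply]; simp
    have hq2 : q 2 = b := by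
      rw [hqdef, WithLp.equiv_symm_apply]; simp
    clear_value q
    refine ⟨q, ⟨?_, ?_⟩, ?_⟩
    · show q 0 ^ 2 + q 1 ^ 2 = ρ ^ 2
      rw [hq0, hq1]
      linear_combination (c ^ 2 + s ^ 2) * ho' + ρ ^ 2 * hcs1
    · exact ball_step ρ R r a b c s hρ hR o ho' hp hkey hcs1 ha2
        (chord_bound ρ a c hρ haρ hc0 hcρ) q hq0 hq1 hq2
    · show ((- o 1 * q 0 + o 0 * q 1) / ρ, q 2) = (a, b)
      rw [hq0, hq1, hq2]
      refine Prod.ext ?_ rfl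
      show (-o 1 * (o 0 * c - o 1 * s) + o 0 * (o 1 * c + o 0 * s)) / ρ = a
      have hnum : -o 1 * (o 0 * c - o 1 * s) + o 0 * (o 1 * c + o 0 * s) = ρ ^ 2 * s := by
        linear_combination s * ho'
      rw [hnum, hsdef]
      field_simp
  calc ENNReal.ofReal (Real.pi * R ^ 2 * Real.exp (-2 * R / ρ))
      = μH[2] {p : ℝ × ℝ | p.1 ^ 2 + (p.2 - o 2) ^ 2 < r ^ 2} := by
        rw [disc_area r (o 2) hr0]
        congr 1
        rw [hr, mul_pow, sq (Real.exp _), ← Real.exp_add,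
          show -(R / ρ) + -(R / ρ) = -2 * R / ρ by ring]
        ring
    _ ≤ μH[2] (f '' S) := measure_mono hincl
    _ ≤ μH[2] S := by
        have h := hlip.hausdorffMeasure_image_le (show (0:ℝ) ≤ 2 by norm_num) S
        simpa using h
end
end

section
/- Let A : (0,∞) → (0,∞) be locally absolutely continuous and nondecreasing with A'(t) ≥ (2/t)A(t)(1 − ht) for a.e. t, and suppose lim_{s→0⁺} A(s)/(πs²) = θ > 0. Then for every R > 0, A(R) ≥ θ·e^{−2hR}·πR². -/
open MeasureTheory Set Filter

lemma exp_partial_sums (x : ℝ) :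
    Tendsto (fun n => ∑ k ∈ Finset.range n, x ^ k / (Nat.factorial k : ℝ)) atTop
      (nhds (Real.exp x)) := by
  have := (NormedSpace.expSeries_div_hasSum_exp x).tendsto_sum_nat
  rwa [Real.exp_eq_exp_ℝ]

lemma gronwall_core (A A' : ℝ → ℝ) (h : ℝ) (hh : 0 ≤ h)
    (hpos : ∀ t ∈ Ioi (0:ℝ), 0 < A t)
    (hmono : MonotoneOn A (Ioi (0:ℝ)))
    (hint : ∀ a b : ℝ, 0 < a → a ≤ b → IntervalIntegrable A' volume a b)
    (hftc : ∀ a b : ℝ, 0 < a → a ≤ b → A b - A a = ∫ t in a..b, A' t)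
    (hineq : ∀ᵐ t ∂(volume.restrict (Ioi (0:ℝ))), 2 / t * A t * (1 - h * t) ≤ A' t)
    (a b : ℝ) (ha : 0 < a) (hab : a ≤ b) (hb1 : h * b ≤ 1) :
    A a * Real.exp (2 * Real.log b - 2 * Real.log a - 2 * h * (b - a)) ≤ A b := by
  set C : ℝ → ℝ := fun t => 2 * Real.log t - 2 * Real.log a - 2 * h * (t - a) with hCdef
  set c : ℝ → ℝ := fun t => 2 / t - 2 * h with hcdef
  -- derivative of C
  have hCd : ∀ s : ℝ, 0 < s → HasDerivAt C (c s) s := by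
    intro s hs
    have l1 := (Real.hasDerivAt_log hs.ne').const_mul 2
    have l2 := ((hasDerivAt_id s).sub_const a).const_mul (2 * h)
    have := (l1.sub_const (2 * Real.log a)).sub l2
    refine this.congr_deriv (Eq.symm ?_)
    simp [hcdef]; field_simp
  -- key induction
  have key : ∀ n : ℕ, ∀ t ∈ Icc a b,
      A a * ∑ k ∈ Finset.range n, (C t) ^ k / (Nat.factorial k : ℝ) ≤ A t := by
    intro n
    induction n with
    | zero =>
      intro t ht
      simpa using (hpos t (lt_of_lt_of_le ha ht.1)).le
    | succ n ih =>
      intro t ht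
      have ht0 : 0 < t := lt_of_lt_of_le ha ht.1
      have hat : a ≤ t := ht.1
      have hsub : Icc a t ⊆ Ioi (0:ℝ) := fun s hs => lt_of_lt_of_le ha hs.1
      have huIcc : uIcc a t = Icc a t := uIcc_of_le hat
      -- positivity of s on Icc a t
      have hspos : ∀ s ∈ Icc a t, 0 < s := fun s hs => lt_of_lt_of_le ha hs.1
      -- continuity facts
      have hlog : ContinuousOn Real.log (Icc a t) :=
        Real.continuousOn_log.mono (fun s hs => by
          simp only [mem_compl_iff, mem_singleton_iff]
          exact (hspos s hs).ne')
      have hCcont : ContinuousOn C (Icc a t) :=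
        ((continuousOn_const.mul hlog).sub continuousOn_const).sub
          (continuousOn_const.mul (continuousOn_id.sub continuousOn_const))
      have hccont : ContinuousOn c (Icc a t) :=
        (continuousOn_const.div continuousOn_id (fun s hs => (hspos s hs).ne')).sub
          continuousOn_const
      have hScont : ContinuousOn (fun s => ∑ k ∈ Finset.range n, (C s) ^ k / (Nat.factorial k : ℝ))
          (Icc a t) := by
        apply continuousOn_finset_sum
        intro k _
        exact (hCcont.pow k).div_const _
      -- c is nonneg on Icc a t
      have hcnn : ∀ s ∈ Icc a t, 0 ≤ c s := by
        intro s hs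
        have hs0 := hspos s hs
        have : h * s ≤ 1 := le_trans (by nlinarith [hs.2, ht.2] : h * s ≤ h * b) hb1
        rw [hcdef]
        rw [sub_nonneg, div_eq_mul_inv]
        rw [← div_eq_mul_inv, le_div_iff₀ hs0]
        nlinarith
      -- FTC for F = S_{n+1} ∘ C
      have hF : ∀ s ∈ uIcc a t, HasDerivAt
          (fun u => ∑ k ∈ Finset.range (n+1), (C u) ^ k / (Nat.factorial k : ℝ))
          (c s * ∑ k ∈ Finset.range n, (C s) ^ k / (Nat.factorial k : ℝ)) s := by
        intro s hs
        rw [huIcc] at hs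
        have hs0 := hspos s hs
        have hsum := HasDerivAt.fun_sum (fun k (_ : k ∈ Finset.range (n+1)) =>
          ((hCd s hs0).pow k).div_const (Nat.factorial k : ℝ))
        refine hsum.congr_deriv (Eq.symm ?_)
        rw [Finset.sum_range_succ']
        simp only [Nat.cast_zero, zero_mul, Nat.factorial_zero, Nat.cast_one, zero_div, add_zero]
        rw [Finset.mul_sum]
        apply Finset.sum_congr rfl
        intro i _
        rw [Nat.factorial_succ]
        have hi : (Nat.factorial i : ℝ) ≠ 0 := Nat.cast_ne_zero.2 (Nat.factorial_ne_zero i)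
        push_cast
        field_simp
      have hFint : IntervalIntegrable
          (fun s => c s * ∑ k ∈ Finset.range n, (C s) ^ k / (Nat.factorial k : ℝ)) volume a t := by
        apply ContinuousOn.intervalIntegrable
        rw [huIcc]
        exact hccont.mul hScont
      have ftcF := intervalIntegral.integral_eq_sub_of_hasDerivAt hF hFint
      -- value at a : C a = 0, S_{n+1} 0 = 1
      have hCa : C a = 0 := by simp [hCdef]
      have hFa : ∑ k ∈ Finset.range (n+1), (C a) ^ k / (Nat.factorial k : ℝ) = 1 := by
        rw [hCa]
        rw [Finset.sum_eq_single 0]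
        · simp
        · intro k _ hk; simp [zero_pow hk]
        · simp
      -- integrability
      have hAint : IntervalIntegrable A volume a t := by
        apply MonotoneOn.intervalIntegrable
        rw [huIcc]
        exact hmono.mono hsub
      have hcAint : IntervalIntegrable (fun s => c s * A s) volume a t := by
        apply hAint.continuousOn_mul
        rw [huIcc]; exact hccont
      -- step 2 : ∫ c A ≤ ∫ A'
      have hae : ∀ᵐ s ∂(volume.restrict (Icc a t)), c s * A s ≤ A' s := by
        have h1 : ∀ᵐ s ∂(volume.restrict (Icc a t)), 2 / s * A s * (1 - h * s) ≤ A' s :=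
          ae_restrict_of_ae_restrict_of_subset hsub hineq
        filter_upwards [h1, ae_restrict_mem measurableSet_Icc] with s hs1 hs2
        have hs0 : s ≠ 0 := (hspos s hs2).ne'
        have : c s * A s = 2 / s * A s * (1 - h * s) := by
          rw [hcdef]; field_simp
        rw [this]; exact hs1
      have step2 : (∫ s in a..t, c s * A s) ≤ ∫ s in a..t, A' s :=
        intervalIntegral.integral_mono_ae_restrict hat hcAint (hint a t ha hat) hae
      -- step 3 : ∫ c (A a S_n) ≤ ∫ c A
      have hSAint : IntervalIntegrable
          (fun s => c s * (A a * ∑ k ∈ Finset.range n, (C s) ^ k / (Nat.factorial k : ℝ)))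
          volume a t := by
        apply ContinuousOn.intervalIntegrable
        rw [huIcc]
        exact hccont.mul (continuousOn_const.mul hScont)
      have step3 : (∫ s in a..t,
          c s * (A a * ∑ k ∈ Finset.range n, (C s) ^ k / (Nat.factorial k : ℝ)))
          ≤ ∫ s in a..t, c s * A s := by
        apply intervalIntegral.integral_mono_on hat hSAint hcAint
        intro s hs
        have hsab : s ∈ Icc a b := ⟨hs.1, le_trans hs.2 ht.2⟩
        exact mul_le_mul_of_nonneg_left (ih s hsab) (hcnn s hs)
      -- step 4 : compute the left integral
      have step4 : (∫ s in a..t,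
          c s * (A a * ∑ k ∈ Finset.range n, (C s) ^ k / (Nat.factorial k : ℝ)))
          = A a * ((∑ k ∈ Finset.range (n+1), (C t) ^ k / (Nat.factorial k : ℝ)) - 1) := by
        have : (∫ s in a..t,
            c s * (A a * ∑ k ∈ Finset.range n, (C s) ^ k / (Nat.factorial k : ℝ)))
            = A a * ∫ s in a..t, c s * ∑ k ∈ Finset.range n, (C s) ^ k / (Nat.factorial k : ℝ) := by
          rw [← intervalIntegral.integral_const_mul]
          apply intervalIntegral.integral_congr
          intro s _
          ring
        rw [this, ftcF, hFa]
      have hA : A t - A a = ∫ s in a..t, A' s := hftc a t ha hat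
      have : A a * ((∑ k ∈ Finset.range (n+1), (C t) ^ k / (Nat.factorial k : ℝ)) - 1)
          ≤ A t - A a := by
        rw [hA, ← step4]
        exact le_trans step3 step2
      linarith [this]
  -- take the limit n → ∞
  have hlim : Tendsto (fun n => A a * ∑ k ∈ Finset.range n, (C b) ^ k / (Nat.factorial k : ℝ))
      atTop (nhds (A a * Real.exp (C b))) :=
    (exp_partial_sums (C b)).const_mul (A a)
  exact le_of_tendsto hlim (Filter.Eventually.of_forall fun n => key n b ⟨hab, le_rfl⟩)

/-- Let `A : (0,∞) → (0,∞)` be nondecreasing and locally absolutely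
continuous (encoded by the fundamental theorem of calculus property with an a.e.
derivative `A'`), satisfying `A'(t) ≥ (2/t) A(t) (1 − h t)` for a.e. `t > 0`, and with
density `lim_{s→0⁺} A(s)/(πs²) = θ > 0`.  Then `A(R) ≥ θ e^{−2hR} πR²` for all `R > 0`.
This is the analytic core of the main theorem of the paper. -/
theorem area_lower_bound_of_density (A A' : ℝ → ℝ) (h θ : ℝ) (hh : 0 ≤ h) (hθ : 0 < θ)
    (hpos : ∀ t ∈ Ioi (0 : ℝ), 0 < A t)
    (hmono : MonotoneOn A (Ioi (0 : ℝ)))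
    (hderiv : ∀ᵐ t ∂(volume.restrict (Ioi (0 : ℝ))), HasDerivAt A (A' t) t)
    (hint : ∀ a b : ℝ, 0 < a → a ≤ b → IntervalIntegrable A' volume a b)
    (hftc : ∀ a b : ℝ, 0 < a → a ≤ b → A b - A a = ∫ t in a..b, A' t)
    (hineq : ∀ᵐ t ∂(volume.restrict (Ioi (0 : ℝ))),
      2 / t * A t * (1 - h * t) ≤ A' t)
    (hdens : Tendsto (fun s => A s / (Real.pi * s ^ 2)) (nhdsWithin 0 (Ioi 0)) (nhds θ)) :
    ∀ R : ℝ, 0 < R → θ * Real.exp (-2 * h * R) * Real.pi * R ^ 2 ≤ A R := by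
  have pi_pos := Real.pi_pos
  -- Stage 2: the bound for R with h * R ≤ 1
  have stage2 : ∀ R : ℝ, 0 < R → h * R ≤ 1 →
      θ * Real.exp (-2 * h * R) * Real.pi * R ^ 2 ≤ A R := by
    intro R hR hR1
    -- the family of lower bounds, as a → 0⁺
    have hbound : ∀ᶠ a in nhdsWithin 0 (Ioi (0:ℝ)),
        (A a / (Real.pi * a ^ 2)) * (Real.pi * R ^ 2 * Real.exp (-2 * h * R) * Real.exp (2 * h * a))
          ≤ A R := by
      have hsmall : ∀ᶠ a in nhdsWithin 0 (Ioi (0:ℝ)), a < R :=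
        eventually_nhdsWithin_of_eventually_nhds (Filter.Tendsto.eventually_lt_const hR tendsto_id)
      filter_upwards [hsmall, self_mem_nhdsWithin] with a haR ha0
      have ha0 : (0:ℝ) < a := ha0
      have key := gronwall_core A A' h hh hpos hmono hint hftc hineq a R ha0 haR.le hR1
      have hrw : A a * Real.exp (2 * Real.log R - 2 * Real.log a - 2 * h * (R - a))
          = (A a / (Real.pi * a ^ 2)) *
            (Real.pi * R ^ 2 * Real.exp (-2 * h * R) * Real.exp (2 * h * a)) := by
        have e1 : Real.exp (2 * Real.log R - 2 * Real.log a - 2 * h * (R - a))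
            = (R ^ 2 / a ^ 2) * (Real.exp (-2 * h * R) * Real.exp (2 * h * a)) := by
          rw [show 2 * Real.log R - 2 * Real.log a - 2 * h * (R - a)
              = (2 * Real.log R) + (-(2 * Real.log a)) + ((-2 * h * R) + (2 * h * a)) by ring]
          rw [Real.exp_add, Real.exp_add, Real.exp_neg, Real.exp_add]
          have eR : Real.exp (2 * Real.log R) = R ^ 2 := by
            rw [two_mul, Real.exp_add, Real.exp_log hR, sq]
          have ea : Real.exp (2 * Real.log a) = a ^ 2 := by
            rw [two_mul, Real.exp_add, Real.exp_log ha0, sq]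
          rw [eR, ea]
          ring
        rw [e1]
        have ha2 : a ^ 2 ≠ 0 := by positivity
        field_simp
      rw [← hrw]
      exact key
    have hlim : Tendsto (fun a =>
        (A a / (Real.pi * a ^ 2)) * (Real.pi * R ^ 2 * Real.exp (-2 * h * R) * Real.exp (2 * h * a)))
        (nhdsWithin 0 (Ioi (0:ℝ)))
        (nhds (θ * (Real.pi * R ^ 2 * Real.exp (-2 * h * R) * Real.exp (2 * h * 0)))) := by
      apply hdens.mul
      apply Tendsto.mono_left _ nhdsWithin_le_nhds
      exact (tendsto_const_nhds.mul ((Real.continuous_exp.tendsto _).comp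
        (tendsto_const_nhds.mul tendsto_id)))
    have hne : (nhdsWithin (0:ℝ) (Ioi 0)).NeBot := by infer_instance
    have := le_of_tendsto hlim hbound
    calc θ * Real.exp (-2 * h * R) * Real.pi * R ^ 2
        = θ * (Real.pi * R ^ 2 * Real.exp (-2 * h * R) * Real.exp (2 * h * 0)) := by
          simp; ring
      _ ≤ A R := this
  -- Stage 3
  intro R hR
  by_cases hcase : h * R ≤ 1
  · exact stage2 R hR hcase
  · push_neg at hcase
    have hhpos : 0 < h := by nlinarith
    set t0 : ℝ := 1 / h with ht0def
    have ht0pos : 0 < t0 := by positivity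
    have ht0R : t0 ≤ R := by
      rw [ht0def, div_le_iff₀ hhpos]; nlinarith
    have h1 : h * t0 ≤ 1 := by rw [ht0def]; field_simp; exact le_rfl
    have b1 := stage2 t0 ht0pos h1
    have b2 : A t0 ≤ A R := hmono (mem_Ioi.2 ht0pos) (mem_Ioi.2 (lt_of_lt_of_le ht0pos ht0R)) ht0R
    -- show θ e^{-2hR} π R² ≤ θ e^{-2h t0} π t0²
    have b3 : θ * Real.exp (-2 * h * R) * Real.pi * R ^ 2
        ≤ θ * Real.exp (-2 * h * t0) * Real.pi * t0 ^ 2 := by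
      have hlog : Real.log (h * R) ≤ h * R - 1 := Real.log_le_sub_one_of_pos (by positivity)
      -- R² e^{-2hR} ≤ t0² e^{-2h t0} ⟺ (hR)² ≤ e^{2hR - 2}
      have hkey : R ^ 2 * Real.exp (-2 * h * R) ≤ t0 ^ 2 * Real.exp (-2 * h * t0) := by
        rw [ht0def]
        have hRt0 : R = (h * R) * (1 / h) := by field_simp
        have e2 : Real.exp (2 * Real.log (h * R)) = (h * R) ^ 2 := by
          rw [two_mul, Real.exp_add, Real.exp_log (by positivity), sq]
        have hexp : (h * R) ^ 2 ≤ Real.exp (2 * (h * R - 1)) := by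
          rw [← e2]
          exact Real.exp_le_exp.2 (by linarith)
        have ht0ne : h ≠ 0 := hhpos.ne'
        rw [show (-2 : ℝ) * h * (1 / h) = -2 by field_simp]
        -- goal : R ^ 2 * exp (-2 h R) ≤ (1/h)^2 * exp (-2)
        have := mul_le_mul_of_nonneg_right hexp (le_of_lt (Real.exp_pos (-2 * h * R)))
        calc R ^ 2 * Real.exp (-2 * h * R)
            = ((h * R) ^ 2 * Real.exp (-2 * h * R)) * (1 / h) ^ 2 := by
              field_simp
          _ ≤ (Real.exp (2 * (h * R - 1)) * Real.exp (-2 * h * R)) * (1 / h) ^ 2 := by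
              apply mul_le_mul_of_nonneg_right _ (by positivity)
              exact mul_le_mul_of_nonneg_right hexp (Real.exp_pos _).le
          _ = (1 / h) ^ 2 * Real.exp (-2) := by
              rw [← Real.exp_add]
              ring_nf
      calc θ * Real.exp (-2 * h * R) * Real.pi * R ^ 2
          = (θ * Real.pi) * (R ^ 2 * Real.exp (-2 * h * R)) := by ring
        _ ≤ (θ * Real.pi) * (t0 ^ 2 * Real.exp (-2 * h * t0)) := by
            apply mul_le_mul_of_nonneg_left hkey (by positivity)
        _ = θ * Real.exp (-2 * h * t0) * Real.pi * t0 ^ 2 := by ring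
    linarith
end

section
/- Let N ≥ 1, h ≥ 0, θ > 0, and let D ⊂ ℝ^N be the compact convex polytope {r ∈ ℝ^N : rᵢ ≥ 0 and rᵢ + rⱼ ≤ dᵢⱼ for all i ≠ j, and rᵢ ≤ 1/h} for given symmetric positive bounds dᵢⱼ. Define eva(r) = Σᵢ θπ e^{−2hrᵢ} rᵢ². If dᵢⱼ ≤ (2−√2)/h for all i,j, then the maximum of eva over D is attained at a vertex (extreme point) of D. -/
open Set

lemma p_nonneg {a : ℝ} (ha2 : a ≤ 1 - Real.sqrt 2 / 2) :
    0 ≤ 4*a^2 - 8*a + 2 := by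
  have s2 : Real.sqrt 2 ^ 2 = 2 := Real.sq_sqrt (by norm_num)
  have s2pos : 0 < Real.sqrt 2 := Real.sqrt_pos.mpr (by norm_num)
  nlinarith [sq_nonneg (1 - a - Real.sqrt 2/2)]

lemma Qpair_aux (a b : ℝ) (ha : 0 ≤ a) (hab : a + b ≤ 2 - Real.sqrt 2) (hle : a ≤ b) :
    0 ≤ Real.exp (-(2*a)) * (4*a^2 - 8*a + 2) + Real.exp (-(2*b)) * (4*b^2 - 8*b + 2) := by
  have s2 : Real.sqrt 2 ^ 2 = 2 := Real.sq_sqrt (by norm_num)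
  have s2pos : 0 < Real.sqrt 2 := Real.sqrt_pos.mpr (by norm_num)
  have s2lt : Real.sqrt 2 < 2 := by nlinarith
  have ha2 : a ≤ 1 - Real.sqrt 2 / 2 := by linarith
  have pa : 0 ≤ 4*a^2 - 8*a + 2 := p_nonneg ha2
  rcases le_or_gt 0 (4*b^2 - 8*b + 2) with pb | pb
  · exact add_nonneg (mul_nonneg (Real.exp_pos _).le pa) (mul_nonneg (Real.exp_pos _).le pb)
  · have hb2 : 1 - Real.sqrt 2 / 2 < b := by
      by_contra hc
      push_neg at hc
      exact absurd (p_nonneg hc) (not_le.mpr pb)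
    have hab' : a ≤ 2 - Real.sqrt 2 - b := by linarith
    have hb'le : 2 - Real.sqrt 2 - b ≤ 1 - Real.sqrt 2/2 := by linarith
    have hb'0 : 0 ≤ 2 - Real.sqrt 2 - b := le_trans ha hab'
    have pb' : 0 ≤ 4*(2 - Real.sqrt 2 - b)^2 - 8*(2 - Real.sqrt 2 - b) + 2 := p_nonneg hb'le
    have step1 : Real.exp (-(2*(2 - Real.sqrt 2 - b))) * (4*(2 - Real.sqrt 2 - b)^2 - 8*(2 - Real.sqrt 2 - b) + 2)
        ≤ Real.exp (-(2*a)) * (4*a^2 - 8*a + 2) := by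
      apply mul_le_mul (Real.exp_le_exp.mpr (by linarith)) ?_ pb' (Real.exp_pos _).le
      nlinarith
    have hδ0 : 0 ≤ b - (1 - Real.sqrt 2/2) := by linarith
    have id1 : 4*(2 - Real.sqrt 2 - b)^2 - 8*(2 - Real.sqrt 2 - b) + 2
        = 4*(b - (1 - Real.sqrt 2/2))^2 + 4*Real.sqrt 2*(b - (1 - Real.sqrt 2/2)) := by
      linear_combination s2
    have id2 : 4*b^2 - 8*b + 2
        = 4*(b - (1 - Real.sqrt 2/2))^2 - 4*Real.sqrt 2*(b - (1 - Real.sqrt 2/2)) := by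
      linear_combination s2
    have eexp : Real.exp (-(2*(2 - Real.sqrt 2 - b)))
        = Real.exp (4*(b - (1 - Real.sqrt 2/2))) * Real.exp (-(2*b)) := by
      rw [← Real.exp_add]; ring_nf
    have he : 1 + 4*(b - (1 - Real.sqrt 2/2)) ≤ Real.exp (4*(b - (1 - Real.sqrt 2/2))) := by
      have := Real.add_one_le_exp (4*(b - (1 - Real.sqrt 2/2))); linarith
    have key : 0 ≤ Real.exp (-(2*(2 - Real.sqrt 2 - b))) * (4*(2 - Real.sqrt 2 - b)^2 - 8*(2 - Real.sqrt 2 - b) + 2)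
        + Real.exp (-(2*b)) * (4*b^2 - 8*b + 2) := by
      rw [eexp, id1, id2]
      set δ := b - (1 - Real.sqrt 2/2) with hδdef
      have h1 : 0 ≤ (Real.exp (4*δ) - (1 + 4*δ)) * (4*δ^2 + 4*Real.sqrt 2*δ) := by
        apply mul_nonneg (by linarith)
        positivity
      have h2 : (0:ℝ) ≤ Real.exp (-(2*b)) := (Real.exp_pos _).le
      nlinarith [mul_nonneg h2 h1, mul_nonneg (mul_nonneg h2 hδ0) hδ0,
        mul_nonneg (mul_nonneg (mul_nonneg h2 hδ0) hδ0) hδ0,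
        mul_nonneg (mul_nonneg (mul_nonneg h2 hδ0) hδ0) s2pos.le]
    linarith

lemma Qpair (a b : ℝ) (ha : 0 ≤ a) (hb : 0 ≤ b) (hab : a + b ≤ 2 - Real.sqrt 2) :
    0 ≤ Real.exp (-(2*a)) * (4*a^2 - 8*a + 2) + Real.exp (-(2*b)) * (4*b^2 - 8*b + 2) := by
  rcases le_total a b with hle | hle
  · exact Qpair_aux a b ha hab hle
  · have := Qpair_aux b a hb (by linarith) hle; linarith

lemma sumQ_nonneg {N : ℕ} (w a : Fin N → ℝ) (hw : ∀ i, 0 ≤ w i) (ha : ∀ i, 0 ≤ a i)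
    (hpairs : ∀ i j, i ≠ j → a i + a j ≤ 2 - Real.sqrt 2)
    (hpartner : ∀ i, w i ≠ 0 → ∃ j, j ≠ i ∧ w j = w i) :
    0 ≤ ∑ i, w i * (Real.exp (-(2 * a i)) * (4*(a i)^2 - 8*(a i) + 2)) := by
  set Q : Fin N → ℝ := fun i => Real.exp (-(2 * a i)) * (4*(a i)^2 - 8*(a i) + 2) with hQ
  by_cases hall : ∀ i, 0 ≤ w i * Q i
  · exact Finset.sum_nonneg fun i _ => hall i
  · push_neg at hall
    obtain ⟨m, hm⟩ := hall
    have hwm : 0 < w m := by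
      rcases lt_or_eq_of_le (hw m) with h' | h'
      · exact h'
      · exfalso; rw [← h'] at hm; simp at hm
    have hQm : Q m < 0 := by
      by_contra hc
      push_neg at hc
      exact absurd (mul_nonneg (hw m) hc) (not_le.mpr hm)
    have hbad : ∀ i, Q i < 0 → 1 - Real.sqrt 2 / 2 < a i := by
      intro i hQi
      by_contra hc
      push_neg at hc
      have := mul_nonneg (Real.exp_pos (-(2 * a i))).le (p_nonneg hc)
      rw [hQ] at hQi; simp only at hQi; linarith
    have hgood : ∀ i, i ≠ m → 0 ≤ w i * Q i := by
      intro i him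
      rcases le_or_gt 0 (Q i) with h' | h'
      · exact mul_nonneg (hw i) h'
      · exfalso
        have h1 := hbad i h'
        have h2 := hbad m hQm
        have := hpairs i m him
        linarith
    obtain ⟨j, hjm, hwj⟩ := hpartner m (ne_of_gt hwm)
    have hsplit : ∑ i, w i * Q i
        = w m * Q m + (w j * Q j + ∑ i ∈ (Finset.univ.erase m).erase j, w i * Q i) := by
      have h1 : ∑ i ∈ Finset.univ.erase m, w i * Q i
          = w j * Q j + ∑ i ∈ (Finset.univ.erase m).erase j, w i * Q i :=
        (Finset.add_sum_erase _ (fun i => w i * Q i)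
          (Finset.mem_erase.mpr ⟨hjm, Finset.mem_univ j⟩)).symm
      have h2 : ∑ i, w i * Q i = w m * Q m + ∑ i ∈ Finset.univ.erase m, w i * Q i :=
        (Finset.add_sum_erase _ (fun i => w i * Q i) (Finset.mem_univ m)).symm
      rw [h2, h1]
    rw [hsplit]
    have hrest : 0 ≤ ∑ i ∈ (Finset.univ.erase m).erase j, w i * Q i := by
      apply Finset.sum_nonneg
      intro i hi
      exact hgood i (Finset.ne_of_mem_erase (Finset.mem_of_mem_erase hi))
    have hpair2 : 0 ≤ Q j + Q m := Qpair (a j) (a m) (ha j) (ha m) (hpairs j m hjm)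
    nlinarith [hwm]

lemma affine_hasDerivAt (A B t : ℝ) : HasDerivAt (fun t => A + t * B) B t := by
  simpa using ((hasDerivAt_id t).mul_const B).const_add A

lemma hasDerivAt_G (h A B t : ℝ) :
    HasDerivAt (fun t => Real.exp (-2*h*(A+t*B)) * (A+t*B)^2)
      (B * (Real.exp (-2*h*(A+t*B)) * (2*(A+t*B) - 2*h*(A+t*B)^2))) t := by
  have hu := affine_hasDerivAt A B t
  have he : HasDerivAt (fun t => Real.exp (-2*h*(A+t*B)))
      (Real.exp (-2*h*(A+t*B)) * (-2*h*B)) t := (hu.const_mul (-2*h)).exp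
  have hsq : HasDerivAt (fun t => (A+t*B)^2) (2*(A+t*B)^1 * B) t := by
    simpa [Pi.pow_def] using hu.pow 2
  have := he.mul hsq
  exact this.congr_deriv (by ring)

lemma hasDerivAt_G1 (h A B t : ℝ) :
    HasDerivAt (fun t => Real.exp (-2*h*(A+t*B)) * (2*(A+t*B) - 2*h*(A+t*B)^2))
      (B * (Real.exp (-2*h*(A+t*B)) * (4*h^2*(A+t*B)^2 - 8*h*(A+t*B) + 2))) t := by
  have hu := affine_hasDerivAt A B t
  have he : HasDerivAt (fun t => Real.exp (-2*h*(A+t*B)))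
      (Real.exp (-2*h*(A+t*B)) * (-2*h*B)) t := (hu.const_mul (-2*h)).exp
  have hsq : HasDerivAt (fun t => (A+t*B)^2) (2*(A+t*B)^1 * B) t := by
    simpa [Pi.pow_def] using hu.pow 2
  have hpoly : HasDerivAt (fun t => 2*(A+t*B) - 2*h*(A+t*B)^2) (2*B - 2*h*(2*(A+t*B)^1*B)) t :=
    (hu.const_mul 2).sub (hsq.const_mul (2*h))
  have := he.mul hpoly
  exact this.congr_deriv (by ring)

lemma hasDerivAt_G0 (h s : ℝ) :
    HasDerivAt (fun s => Real.exp (-2*h*s) * s^2) (Real.exp (-2*h*s) * (2*s - 2*h*s^2)) s := by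
  have hu : HasDerivAt (fun s : ℝ => s) 1 s := hasDerivAt_id s
  have he : HasDerivAt (fun s : ℝ => Real.exp (-2*h*s)) (Real.exp (-2*h*s) * (-2*h*1)) s :=
    (hu.const_mul (-2*h)).exp
  have hsq : HasDerivAt (fun s : ℝ => s^2) (2*s^1*1) s := hu.pow 2
  have := he.mul hsq
  exact this.congr_deriv (by ring)
set_option maxHeartbeats 1000000 in
/-- Let `D ⊂ ℝᴺ` be the compact convex polytope of admissible radii
`{r : rᵢ ≥ 0, rᵢ + rⱼ ≤ dᵢⱼ (i ≠ j), rᵢ ≤ 1/h}` for symmetric positive bounds `dᵢⱼ`,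
and let `eva(r) = Σᵢ θ π e^{−2hrᵢ} rᵢ²`.  If `dᵢⱼ ≤ (2−√2)/h` for all `i, j`, then the
maximum of `eva` over `D` is attained at an extreme point (vertex) of `D`. -/
theorem eva_max_at_extreme_point (N : ℕ) (hN : 1 ≤ N) (h θ : ℝ)
    (hh : 0 ≤ h) (hθ : 0 < θ)
    (d : Fin N → Fin N → ℝ)
    (hdsymm : ∀ i j, d i j = d j i)
    (hdpos : ∀ i j, 0 < d i j)
    (hdle : ∀ i j, d i j ≤ (2 - Real.sqrt 2) / h)
    (D : Set (Fin N → ℝ))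
    (hD : D = {r | (∀ i, 0 ≤ r i) ∧ (∀ i j, i ≠ j → r i + r j ≤ d i j) ∧
      (∀ i, r i ≤ 1 / h)}) :
    ∃ r ∈ Set.extremePoints ℝ D,
      ∀ s ∈ D, ∑ i, θ * Real.pi * Real.exp (-2 * h * s i) * s i ^ 2
        ≤ ∑ i, θ * Real.pi * Real.exp (-2 * h * r i) * r i ^ 2 := by
  classical
  have s2sq : Real.sqrt 2 ^ 2 = 2 := Real.sq_sqrt (by norm_num)
  have s2nn : 0 ≤ Real.sqrt 2 := Real.sqrt_nonneg 2
  have s2gt1 : 1 < Real.sqrt 2 := by nlinarith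
  have s2lt2 : Real.sqrt 2 < 2 := by nlinarith
  have i0 : Fin N := ⟨0, hN⟩
  have hpos : 0 < h := by
    rcases hh.eq_or_lt with h0 | h0
    · exfalso
      have h1 := hdle i0 i0
      have h2 := hdpos i0 i0
      rw [← h0, div_zero] at h1
      linarith
    · exact h0
  set f : (Fin N → ℝ) → ℝ := fun r => ∑ i, θ * Real.pi * Real.exp (-2 * h * r i) * r i ^ 2
    with hfdef
  have hmem : ∀ r : Fin N → ℝ, r ∈ D ↔ ((∀ i, 0 ≤ r i) ∧ (∀ i j, i ≠ j → r i + r j ≤ d i j) ∧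
      (∀ i, r i ≤ 1 / h)) := fun r => by rw [hD]; exact Iff.rfl
  have hfc : Continuous f := by
    apply continuous_finset_sum
    intro i _
    fun_prop
  -- D is closed
  have hDclosed : IsClosed D := by
    rw [hD, Set.setOf_and, Set.setOf_and]
    refine IsClosed.inter ?_ (IsClosed.inter ?_ ?_)
    · rw [Set.setOf_forall]
      exact isClosed_iInter fun i => isClosed_le continuous_const (continuous_apply i)
    · rw [Set.setOf_forall]
      refine isClosed_iInter fun i => ?_
      rw [Set.setOf_forall]
      refine isClosed_iInter fun j => ?_
      by_cases hij : i = j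
      · simp [hij]
      · have : {r : Fin N → ℝ | i ≠ j → r i + r j ≤ d i j}
            = {r : Fin N → ℝ | r i + r j ≤ d i j} := by
          ext r; simp [hij]
        rw [this]
        exact isClosed_le ((continuous_apply i).add (continuous_apply j)) continuous_const
    · rw [Set.setOf_forall]
      exact isClosed_iInter fun i => isClosed_le (continuous_apply i) continuous_const
  have hDsub : D ⊆ Set.pi Set.univ (fun _ : Fin N => Set.Icc (0:ℝ) (1/h)) := by
    intro r hr
    rw [hmem] at hr
    exact fun i _ => ⟨hr.1 i, hr.2.2 i⟩
  have hDcomp : IsCompact D :=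
    (isCompact_univ_pi fun _ => isCompact_Icc).of_isClosed_subset hDclosed hDsub
  have hDne : D.Nonempty := by
    refine ⟨0, ?_⟩
    rw [hmem]
    refine ⟨fun i => le_refl 0, fun i j hij => ?_, fun i => by positivity⟩
    simp only [Pi.zero_apply, add_zero]
    exact (hdpos i j).le
  have hDconv : Convex ℝ D := by
    intro p hp q hq a b ha hb hab
    rw [hmem] at hp hq ⊢
    have happ : ∀ i, (a • p + b • q) i = a * p i + b * q i := fun i => by
      simp [smul_eq_mul]
    refine ⟨fun i => ?_, fun i j hij => ?_, fun i => ?_⟩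
    · rw [happ]
      have h1 := mul_nonneg ha (hp.1 i)
      have h2 := mul_nonneg hb (hq.1 i)
      linarith
    · rw [happ, happ]
      have h1 := mul_le_mul_of_nonneg_left (hp.2.1 i j hij) ha
      have h2 := mul_le_mul_of_nonneg_left (hq.2.1 i j hij) hb
      have h3 : a * d i j + b * d i j = d i j := by linear_combination (d i j) * hab
      linarith
    · rw [happ]
      have h1 := mul_le_mul_of_nonneg_left (hp.2.2 i) ha
      have h2 := mul_le_mul_of_nonneg_left (hq.2.2 i) hb
      have h3 : a * (1/h) + b * (1/h) = 1/h := by linear_combination (1/h) * hab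
      linarith
  -- strict monotonicity of the scalar profile
  have hGc : Continuous fun s : ℝ => Real.exp (-2*h*s) * s^2 := by fun_prop
  have hGmono : StrictMonoOn (fun s : ℝ => Real.exp (-2*h*s) * s^2) (Set.Icc 0 (1/h)) := by
    apply strictMonoOn_of_deriv_pos (convex_Icc _ _) hGc.continuousOn
    intro s hs
    rw [interior_Icc, Set.mem_Ioo] at hs
    rw [(hasDerivAt_G0 h s).deriv]
    have h1 : h * s < 1 := by
      have h2 := hs.2
      rw [lt_div_iff₀ hpos] at h2
      linarith
    have h3 : 0 < 2*s - 2*h*s^2 := by nlinarith [hs.1]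
    exact mul_pos (Real.exp_pos _) h3
  -- maximizer of f, then of the squared norm among maximizers
  obtain ⟨r0, hr0D, hr0max⟩ := hDcomp.exists_isMaxOn hDne hfc.continuousOn
  set M : Set (Fin N → ℝ) := {r | r ∈ D ∧ f r0 ≤ f r} with hMdef
  have hMsub : M ⊆ D := fun r hr => hr.1
  have hMclosed : IsClosed M := hDclosed.inter (isClosed_le continuous_const hfc)
  have hMcomp : IsCompact M := hDcomp.of_isClosed_subset hMclosed hMsub
  have hMne : M.Nonempty := ⟨r0, hr0D, le_refl _⟩
  have hnc : Continuous (fun r : Fin N → ℝ => ∑ i, (r i)^2) := by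
    apply continuous_finset_sum
    intro i _
    fun_prop
  obtain ⟨rs, hrsM, hrsnmax⟩ := hMcomp.exists_isMaxOn hMne hnc.continuousOn
  have hrsD : rs ∈ D := hrsM.1
  have hfmaxD : ∀ s ∈ D, f s ≤ f rs := fun s hs => le_trans (hr0max hs) hrsM.2
  have hrsD' := (hmem rs).mp hrsD
  refine ⟨rs, ?_, fun s hs => hfmaxD s hs⟩
  -- rs is an extreme point of D
  rw [mem_extremePoints]
  refine ⟨hrsD, ?_⟩
  intro x hx y hy hseg
  obtain ⟨a, b, ha, hb, hab, hxy⟩ := hseg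
  have hrs_i : ∀ i, rs i = a * x i + b * y i := by
    intro i
    rw [← hxy]
    simp [smul_eq_mul]
  have hxD := (hmem x).mp hx
  have hyD := (hmem y).mp hy
  set u : Fin N → ℝ := fun i => y i - x i with hudef
  -- partner property at the maximizer
  have hpart : ∀ i, u i ≠ 0 → ∃ j, j ≠ i ∧ u j = - u i := by
    intro i hui
    have hxyi : x i ≠ y i := by
      intro hc
      apply hui
      simp [hudef, hc]
    have hrsi_lt : rs i < 1/h := by
      rcases lt_or_eq_of_le (hrsD'.2.2 i) with h' | h'
      · exact h'
      · exfalso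
        have h1 := hxD.2.2 i
        have h2 := hyD.2.2 i
        have h3 := hrs_i i
        apply hxyi
        have h4 : a * (1/h) + b * (1/h) = 1/h := by linear_combination (1/h) * hab
        have hx1 : x i = 1/h := by
          refine le_antisymm h1 ?_
          nlinarith [mul_le_mul_of_nonneg_left h2 hb.le, h4]
        have hy1 : y i = 1/h := by
          refine le_antisymm h2 ?_
          nlinarith [mul_le_mul_of_nonneg_left h1 ha.le, h4]
        rw [hx1, hy1]
    have hactive : ∃ j, j ≠ i ∧ rs i + rs j = d i j := by
      by_contra hno
      push_neg at hno
      have hne' : (Finset.univ : Finset (Fin N)).Nonempty := ⟨i, Finset.mem_univ i⟩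
      set ε := Finset.inf' Finset.univ hne'
        (fun j => if j = i then 1/h - rs i else d i j - rs i - rs j) with hε
      have hεpos : 0 < ε := by
        rw [hε, Finset.lt_inf'_iff]
        intro j _
        by_cases hji : j = i
        · rw [if_pos hji]; linarith
        · rw [if_neg hji]
          have h1 := hrsD'.2.1 i j (fun hc => hji hc.symm)
          have h2 := hno j hji
          have := lt_of_le_of_ne h1 h2
          linarith
      have hεle : ∀ j, ε ≤ if j = i then 1/h - rs i else d i j - rs i - rs j :=
        fun j => Finset.inf'_le _ (Finset.mem_univ j)
      set r' := Function.update rs i (rs i + ε) with hr'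
      have hr'app : ∀ j, r' j = if j = i then rs i + ε else rs j := by
        intro j
        rw [hr', Function.update_apply]
      have hr'D : r' ∈ D := by
        rw [hmem]
        refine ⟨fun j => ?_, fun j k hjk => ?_, fun j => ?_⟩
        · rw [hr'app]
          by_cases hji : j = i
          · rw [if_pos hji]
            have := hrsD'.1 i
            linarith
          · rw [if_neg hji]; exact hrsD'.1 j
        · have hεk := hεle k
          have hεj := hεle j
          rw [hr'app, hr'app]
          by_cases hji : j = i
          · rw [if_pos hji]
            by_cases hki : k = i
            · exact absurd (hji.trans hki.symm) hjk
            · rw [if_neg hki]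
              rw [if_neg hki] at hεk
              rw [hji]
              linarith
          · rw [if_neg hji]
            by_cases hki : k = i
            · rw [if_pos hki]
              rw [if_neg hji] at hεj
              rw [hki]
              have := hdsymm i j
              linarith
            · rw [if_neg hki]
              exact hrsD'.2.1 j k hjk
        · rw [hr'app]
          by_cases hji : j = i
          · rw [if_pos hji]
            have h5 := hεle i
            rw [if_pos rfl] at h5
            linarith
          · rw [if_neg hji]; exact hrsD'.2.2 j
      have hriε : rs i + ε ≤ 1/h := by
        have h5 := hεle i
        rw [if_pos rfl] at h5
        linarith
      have hstrict : θ * Real.pi * Real.exp (-2 * h * rs i) * rs i ^ 2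
          < θ * Real.pi * Real.exp (-2 * h * (rs i + ε)) * (rs i + ε) ^ 2 := by
        have hmono := hGmono (Set.mem_Icc.mpr ⟨hrsD'.1 i, hrsD'.2.2 i⟩)
          (Set.mem_Icc.mpr ⟨by linarith [hrsD'.1 i], hriε⟩)
          (lt_add_of_pos_right _ hεpos)
        calc θ * Real.pi * Real.exp (-2 * h * rs i) * rs i ^ 2
            = θ * Real.pi * (Real.exp (-2*h*rs i) * rs i ^ 2) := by ring
          _ < θ * Real.pi * (Real.exp (-2*h*(rs i + ε)) * (rs i + ε) ^ 2) :=
              mul_lt_mul_of_pos_left hmono (by positivity)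
          _ = θ * Real.pi * Real.exp (-2 * h * (rs i + ε)) * (rs i + ε) ^ 2 := by ring
      have hlt : f rs < f r' := by
        simp only [hfdef]
        apply Finset.sum_lt_sum
        · intro j _
          rw [hr'app]
          by_cases hji : j = i
          · rw [if_pos hji, hji]
            exact hstrict.le
          · rw [if_neg hji]
        · refine ⟨i, Finset.mem_univ i, ?_⟩
          rw [hr'app, if_pos rfl]
          exact hstrict
      exact absurd (hfmaxD r' hr'D) (not_le.mpr hlt)
    obtain ⟨j, hji, hact⟩ := hactive
    refine ⟨j, hji, ?_⟩
    have h1 : x i + x j ≤ d i j := hxD.2.1 i j (fun hc => hji hc.symm)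
    have h2 : y i + y j ≤ d i j := hyD.2.1 i j (fun hc => hji hc.symm)
    have h3 := hrs_i i
    have h4 := hrs_i j
    have h5 : a * d i j + b * d i j = d i j := by linear_combination (d i j) * hab
    have hxe : x i + x j = d i j := by
      refine le_antisymm h1 ?_
      nlinarith [mul_le_mul_of_nonneg_left h2 hb.le, h5]
    have hye : y i + y j = d i j := by
      refine le_antisymm h2 ?_
      nlinarith [mul_le_mul_of_nonneg_left h1 ha.le, h5]
    simp only [hudef]
    linarith
  -- the restriction of f to the segment is convex
  set φ : ℝ → ℝ := fun t => ∑ i, θ * Real.pi *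
    (Real.exp (-2*h*(x i + t * u i)) * (x i + t * u i)^2) with hφdef
  set φ1 : ℝ → ℝ := fun t => ∑ i, θ * Real.pi *
    (u i * (Real.exp (-2*h*(x i + t*u i)) * (2*(x i + t*u i) - 2*h*(x i + t*u i)^2))) with hφ1def
  have Hφ : ∀ t, HasDerivAt φ (φ1 t) t := by
    intro t
    simp only [hφdef, hφ1def]
    exact HasDerivAt.fun_sum fun i _ => (hasDerivAt_G h (x i) (u i) t).const_mul (θ*Real.pi)
  have Hφ1 : ∀ t, HasDerivAt φ1 (∑ i, θ * Real.pi * (u i * (u i *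
      (Real.exp (-2*h*(x i + t*u i)) * (4*h^2*(x i + t*u i)^2 - 8*h*(x i + t*u i) + 2))))) t := by
    intro t
    simp only [hφ1def]
    exact HasDerivAt.fun_sum fun i _ =>
      ((hasDerivAt_G1 h (x i) (u i) t).const_mul (u i)).const_mul (θ*Real.pi)
  have hd1 : deriv φ = φ1 := funext fun t => (Hφ t).deriv
  have hφconv : ConvexOn ℝ (Set.Icc (0:ℝ) 1) φ := by
    apply convexOn_of_deriv2_nonneg (convex_Icc 0 1)
    · exact (Differentiable.continuous fun t => (Hφ t).differentiableAt).continuousOn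
    · exact fun t _ => ((Hφ t).differentiableAt).differentiableWithinAt
    · rw [hd1]
      exact fun t _ => ((Hφ1 t).differentiableAt).differentiableWithinAt
    · intro t ht
      rw [interior_Icc, Set.mem_Ioo] at ht
      have h2 : deriv^[2] φ t = deriv (deriv φ) t := by
        rw [show (2:ℕ) = 1 + 1 from rfl, Function.iterate_succ, Function.iterate_one]
        rfl
      rw [h2, hd1, (Hφ1 t).deriv]
      have hst : (fun i => x i + t * u i) ∈ D := by
        have hmemD := hDconv hx hy (by linarith : (0:ℝ) ≤ 1 - t) ht.1.le (by ring)
        have heqf : (fun i => x i + t*u i) = (1-t) • x + t • y := by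
          funext i
          simp only [hudef, Pi.add_apply, Pi.smul_apply, smul_eq_mul]
          ring
        rw [heqf]
        exact hmemD
      have hstD := (hmem _).mp hst
      have hw : ∀ i, 0 ≤ u i^2 := fun i => sq_nonneg _
      have haa : ∀ i, 0 ≤ h * (x i + t*u i) := fun i => mul_nonneg hpos.le (hstD.1 i)
      have hpairs : ∀ i j, i ≠ j →
          (h*(x i + t*u i)) + (h*(x j + t*u j)) ≤ 2 - Real.sqrt 2 := by
        intro i j hij
        have h1 := hstD.2.1 i j hij
        have h2 := hdle i j
        have h3 : d i j * h ≤ 2 - Real.sqrt 2 := (le_div_iff₀ hpos).mp h2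
        nlinarith [mul_le_mul_of_nonneg_left h1 hpos.le]
      have hpartner : ∀ i, (u i^2) ≠ 0 → ∃ j, j ≠ i ∧ u j^2 = u i^2 := by
        intro i hi
        obtain ⟨j, hji, hj⟩ := hpart i (by simpa using hi)
        exact ⟨j, hji, by rw [hj]; ring⟩
      have hsum := sumQ_nonneg (fun i => u i^2) (fun i => h*(x i + t*u i)) hw haa hpairs hpartner
      have heq : ∑ i, θ * Real.pi * (u i * (u i *
          (Real.exp (-2*h*(x i + t*u i)) * (4*h^2*(x i + t*u i)^2 - 8*h*(x i + t*u i) + 2))))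
          = θ * Real.pi * ∑ i, (u i^2) * (Real.exp (-(2 * (h*(x i + t*u i)))) *
            (4*(h*(x i + t*u i))^2 - 8*(h*(x i + t*u i)) + 2)) := by
        rw [Finset.mul_sum]
        apply Finset.sum_congr rfl
        intro i _
        have hexp : Real.exp (-2*h*(x i + t*u i)) = Real.exp (-(2*(h*(x i + t*u i)))) := by
          congr 1
          ring
        rw [hexp]
        ring
      rw [heq]
      exact mul_nonneg (by positivity) hsum
  have h0mem : (0:ℝ) ∈ Set.Icc (0:ℝ) 1 := by norm_num
  have h1mem : (1:ℝ) ∈ Set.Icc (0:ℝ) 1 := by norm_num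
  have hkey := hφconv.2 h0mem h1mem ha.le hb.le hab
  simp only [smul_eq_mul, mul_zero, mul_one, zero_add] at hkey
  have hφ0 : φ 0 = f x := by
    simp only [hφdef, hfdef]
    apply Finset.sum_congr rfl
    intro i _
    have hz : x i + 0 * u i = x i := by ring
    rw [hz]
    ring
  have hφ1y : φ 1 = f y := by
    simp only [hφdef, hfdef]
    apply Finset.sum_congr rfl
    intro i _
    have hz : x i + 1 * u i = y i := by simp only [hudef]; ring
    rw [hz]
    ring
  have hφb : φ b = f rs := by
    simp only [hφdef, hfdef]
    apply Finset.sum_congr rfl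
    intro i _
    have hz : x i + b * u i = rs i := by
      rw [hrs_i i]
      simp only [hudef]
      linear_combination (-(x i)) * hab
    rw [hz]
    ring
  rw [hφ0, hφ1y, hφb] at hkey
  have hfx := hfmaxD x hx
  have hfy := hfmaxD y hy
  have h6 : a * f rs + b * f rs = f rs := by linear_combination (f rs) * hab
  have hfxe : f x = f rs := by
    refine le_antisymm hfx ?_
    nlinarith [mul_le_mul_of_nonneg_left hfy hb.le, h6]
  have hfye : f y = f rs := by
    refine le_antisymm hfy ?_
    nlinarith [mul_le_mul_of_nonneg_left hfx ha.le, h6]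
  have hxM : x ∈ M := ⟨hx, by rw [hfxe]; exact hrsM.2⟩
  have hyM : y ∈ M := ⟨hy, by rw [hfye]; exact hrsM.2⟩
  have hnx := hrsnmax hxM
  have hny := hrsnmax hyM
  simp only [Set.mem_setOf_eq] at hnx hny
  have hid : ∑ i, (rs i)^2 + a*b*∑ i, (x i - y i)^2
      = a * ∑ i, (x i)^2 + b * ∑ i, (y i)^2 := by
    rw [Finset.mul_sum, Finset.mul_sum, Finset.mul_sum, ← Finset.sum_add_distrib,
      ← Finset.sum_add_distrib]
    apply Finset.sum_congr rfl
    intro i _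
    rw [hrs_i i]
    linear_combination (a * (x i)^2 + b * (y i)^2) * hab
  have hsq0 : ∑ i, (x i - y i)^2 ≤ 0 := by
    have h7 : a * ∑ i, (rs i)^2 + b * ∑ i, (rs i)^2 = ∑ i, (rs i)^2 := by
      linear_combination (∑ i, (rs i)^2) * hab
    nlinarith [mul_le_mul_of_nonneg_left hnx ha.le, mul_le_mul_of_nonneg_left hny hb.le,
      mul_pos ha hb, h7]
  have hxyeq : x = y := by
    funext i
    have h1 : ∀ i ∈ Finset.univ, (0:ℝ) ≤ (x i - y i)^2 := fun i _ => sq_nonneg _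
    have h2 : ∑ i, (x i - y i)^2 = 0 := le_antisymm hsq0 (Finset.sum_nonneg h1)
    have h3 := (Finset.sum_eq_zero_iff_of_nonneg h1).mp h2 i (Finset.mem_univ i)
    have h4 : x i - y i = 0 := by
      have := sq_eq_zero_iff.mp h3
      exact this
    linarith
  have hrsx : x = rs := by
    funext i
    have := hrs_i i
    rw [← hxyeq] at this
    rw [this]
    linear_combination (-(x i)) * hab
  exact ⟨hrsx, hxyeq ▸ hrsx⟩
end
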